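/- Let φ : ℝ≥0 → X be continuous into a complete metric space, positively Lagrange stable in the Bebutov shift dynamical system (i.e., {φ^h : h ≥ 0} is precompact in C(ℝ≥0, X) with the compact-open topology), and τ > 0. Then φ is S-asymptotically τ-periodic (ρ(φ(t+τ), φ(t)) → 0) if and only if every function ψ in the ω-limit set of φ under the shift flow is τ-periodic (ψ(t+τ) = ψ(t) for all t). -/

import Mathlib

open Filter Topology Set NNReal

theorem stmt11 {X : Type*} [MetricSpace X] [CompleteSpace X]
    (φ : C(ℝ≥0, X))
    (σ : ℝ≥0 → C(ℝ≥0, X) → C(ℝ≥0, X))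
    (hσ : ∀ (h : ℝ≥0) (ψ : C(ℝ≥0, X)) (t : ℝ≥0), σ h ψ t = ψ (t + h))
    (hLagrange : IsCompact (closure (Set.range fun h : ℝ≥0 => σ h φ)))
    (τ : ℝ≥0) (hτ : 0 < τ) :
    Tendsto (fun t : ℝ≥0 => dist (φ (t + τ)) (φ t)) atTop (𝓝 0) ↔
      ∀ ψ : C(ℝ≥0, X),
        (∃ u : ℕ → ℝ≥0, Tendsto u atTop atTop ∧
          Tendsto (fun n => σ (u n) φ) atTop (𝓝 ψ)) →
        ∀ t : ℝ≥0, ψ (t + τ) = ψ t := by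
  constructor
  · rintro hp ψ ⟨u, hu, hconv⟩ t
    have h1 : Tendsto (fun n => (σ (u n) φ) (t + τ)) atTop (𝓝 (ψ (t + τ))) :=
      ((continuous_eval_const (t + τ)).tendsto ψ).comp hconv
    have h2 : Tendsto (fun n => (σ (u n) φ) t) atTop (𝓝 (ψ t)) :=
      ((continuous_eval_const t).tendsto ψ).comp hconv
    simp only [hσ] at h1 h2
    have htu : Tendsto (fun n => t + u n) atTop atTop :=
      tendsto_atTop_mono (fun n => le_add_self) hu
    have h3 : Tendsto (fun n => dist (φ (t + u n + τ)) (φ (t + u n))) atTop (𝓝 0) :=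
      hp.comp htu
    have h4 : Tendsto (fun n => dist (φ (t + τ + u n)) (φ (t + u n))) atTop (𝓝 0) := by
      convert h3 using 3 with n
      ring
    have h5 : Tendsto (fun n => dist (φ (t + τ + u n)) (φ (t + u n))) atTop
        (𝓝 (dist (ψ (t + τ)) (ψ t))) := h1.dist h2
    have := tendsto_nhds_unique h5 h4
    exact dist_eq_zero.mp this
  · intro h
    by_contra hc
    rw [Metric.tendsto_nhds] at hc
    push_neg at hc
    obtain ⟨ε, hε, hfreq⟩ := hc
    have hfr : ∀ n : ℕ, ∃ b ≥ (n : ℝ≥0), ε ≤ dist (dist (φ (b + τ)) (φ b)) 0 :=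
      fun n => frequently_atTop.mp hfreq (n : ℝ≥0)
    choose t ht hd using hfr
    have htt : Tendsto t atTop atTop :=
      tendsto_atTop_mono ht tendsto_natCast_atTop_atTop
    have hmem : ∀ n, σ (t n) φ ∈ closure (Set.range fun h : ℝ≥0 => σ h φ) :=
      fun n => subset_closure ⟨t n, rfl⟩
    obtain ⟨ψ, -, g, hg, hgt⟩ := hLagrange.tendsto_subseq hmem
    have hper := h ψ ⟨t ∘ g, htt.comp hg.tendsto_atTop, hgt⟩
    have hψτ : ψ τ = ψ 0 := by simpa using hper 0
    have h1 : Tendsto (fun n => ((σ (t (g n)) φ)) τ) atTop (𝓝 (ψ τ)) :=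
      ((continuous_eval_const τ).tendsto ψ).comp hgt
    have h2 : Tendsto (fun n => ((σ (t (g n)) φ)) 0) atTop (𝓝 (ψ 0)) :=
      ((continuous_eval_const (0 : ℝ≥0)).tendsto ψ).comp hgt
    simp only [hσ, zero_add] at h1 h2
    have h1' : Tendsto (fun n => φ (t (g n) + τ)) atTop (𝓝 (ψ τ)) := by
      convert h1 using 3 with n; ring
    have hlim : Tendsto (fun n => dist (φ (t (g n) + τ)) (φ (t (g n)))) atTop
        (𝓝 (dist (ψ τ) (ψ 0))) := h1'.dist h2
    have hεle : ε ≤ dist (ψ τ) (ψ 0) := by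
      refine le_of_tendsto_of_tendsto tendsto_const_nhds hlim ?_
      filter_upwards with n
      have := hd (g n)
      simpa using this
    rw [hψτ, dist_self] at hεle
    exact absurd hεle (not_le.mpr hε)
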